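/- Let G be a symmetric n×n matrix over the ring ℤ₂ of 2-adic integers. Then there exists U ∈ GLₙ(ℤ₂) such that UᵀGU is block diagonal with each diagonal block of size 1 or 2. Moreover, if there exists x ∈ ℤ₂ⁿ such that xᵀGx is a unit in ℤ₂, then U can be chosen so that in addition every diagonal block of size 2 of UᵀGU has all its entries in 2ℤ₂. -/

import Mathlib

open Matrix


open Matrix

namespace Pf
abbrev R := ℤ_[2]

lemma two_dvd_of_not_isUnit {x : R} (h : ¬ IsUnit x) : (2:R) ∣ x := by
  have h1 : ‖x‖ < 1 := lt_of_le_of_ne x.norm_le_one (by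
    intro he; exact h (PadicInt.isUnit_iff.2 he))
  have := (PadicInt.norm_lt_one_iff_dvd x).1 h1
  simpa using this

lemma not_isUnit_of_two_dvd {x : R} (h : (2:R) ∣ x) : ¬ IsUnit x := by
  intro hu
  have h1 : ‖x‖ < 1 := (PadicInt.norm_lt_one_iff_dvd x).2 (by simpa using h)
  rw [PadicInt.isUnit_iff.1 hu] at h1; exact lt_irrefl _ h1

lemma isUnit_of_dvd_add {a b : R} (ha : (2:R) ∣ a) (hb : IsUnit b) : IsUnit (a + b) := by
  by_contra h
  exact not_isUnit_of_two_dvd ((dvd_add_right ha).mp (two_dvd_of_not_isUnit h)) hb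

lemma isUnit_of_dvd_sub {a b : R} (ha : (2:R) ∣ a) (hb : IsUnit b) : IsUnit (a - b) := by
  have := isUnit_of_dvd_add ha hb.neg
  simpa [sub_eq_add_neg] using this

/-- the "good" predicate for part 1 -/
def good1 (m : ℕ) (B : Matrix (Fin m) (Fin m) R) : Prop :=
  ∀ j l, j ≠ l → ((2:R) ∣ B j j ∧ B j l = B l j)

/-- the "good" predicate for part 2 -/
def good2 (m : ℕ) (B : Matrix (Fin m) (Fin m) R) : Prop :=
  ∀ j l, j ≠ l → ((2:R) ∣ B j j ∧ (2:R) ∣ B j l)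

lemma good_one {good : ∀ m, Matrix (Fin m) (Fin m) R → Prop}
    (hg : good = good1 ∨ good = good2) (B : Matrix (Fin 1) (Fin 1) R) : good 1 B := by
  rcases hg with rfl | rfl <;> exact fun j l h => absurd (Subsingleton.elim j l) h

lemma good2_two_smul (m : ℕ) (B : Matrix (Fin m) (Fin m) R) : good2 m ((2:R) • B) := by
  intro j l _
  constructor <;> exact ⟨B _ _, by simp [Matrix.smul_apply]; ring⟩

lemma good1_smul (c : R) {m : ℕ} {B : Matrix (Fin m) (Fin m) R} (h : good1 m B) :
    good1 m (c • B) := by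
  intro j l hjl
  refine ⟨Dvd.dvd.mul_left (h j l hjl).1 c, by simp [Matrix.smul_apply, (h j l hjl).2]⟩

lemma good2_smul (c : R) {m : ℕ} {B : Matrix (Fin m) (Fin m) R} (h : good2 m B) :
    good2 m (c • B) := by
  intro j l hjl
  exact ⟨Dvd.dvd.mul_left (h j l hjl).1 c, Dvd.dvd.mul_left (h j l hjl).2 c⟩

/-- Inductive block-diagonal structure over `Fin n`. -/
inductive BD (good : ∀ m, Matrix (Fin m) (Fin m) R → Prop) : ∀ n, Matrix (Fin n) (Fin n) R → Prop
  | nil (M : Matrix (Fin 0) (Fin 0) R) : BD good 0 M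
  | cons {s n : ℕ} (hs : s = 1 ∨ s = 2) (A : Matrix (Fin s) (Fin s) R) (hA : good s A)
      {M : Matrix (Fin n) (Fin n) R} (h : BD good n M) :
      BD good (s + n)
        ((fromBlocks A 0 0 M).submatrix finSumFinEquiv.symm finSumFinEquiv.symm)

/-- congruence of square matrices -/
def Cg {ι : Type} [Fintype ι] [DecidableEq ι] (M N : Matrix ι ι R) : Prop :=
  ∃ U : Matrix ι ι R, IsUnit U.det ∧ Uᵀ * M * U = N

lemma Cg.refl {ι : Type} [Fintype ι] [DecidableEq ι] (M : Matrix ι ι R) : Cg M M :=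
  ⟨1, by simp, by simp⟩

lemma Cg.trans {ι : Type} [Fintype ι] [DecidableEq ι] {M N P : Matrix ι ι R}
    (h1 : Cg M N) (h2 : Cg N P) : Cg M P := by
  obtain ⟨U, hU, rfl⟩ := h1
  obtain ⟨V, hV, rfl⟩ := h2
  refine ⟨U * V, by rw [Matrix.det_mul]; exact hU.mul hV, ?_⟩
  rw [Matrix.transpose_mul]
  noncomm_ring

/-- decomposability -/
def Dd (good : ∀ m, Matrix (Fin m) (Fin m) R → Prop) {ι : Type} [Fintype ι] [DecidableEq ι]
    (M : Matrix ι ι R) : Prop :=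
  ∃ (n : ℕ) (f : ι ≃ Fin n) (N : Matrix (Fin n) (Fin n) R),
    Cg M (N.submatrix f f) ∧ BD good n N

lemma Dd.of_cg {ι : Type} [Fintype ι] [DecidableEq ι] {M N : Matrix ι ι R} {good}
    (h : Cg M N) (hd : Dd good N) : Dd good M := by
  obtain ⟨n, f, N', h1, h2⟩ := hd
  exact ⟨n, f, N', h.trans h1, h2⟩

lemma Dd.reindex {ι κ : Type} [Fintype ι] [DecidableEq ι] [Fintype κ] [DecidableEq κ]
    {good} (ρ : κ ≃ ι) {M : Matrix ι ι R} (h : Dd good (M.submatrix ρ ρ)) : Dd good M := by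
  obtain ⟨n, f, N, ⟨U, hU, hUe⟩, h2⟩ := h
  refine ⟨n, ρ.symm.trans f, N, ⟨U.submatrix ρ.symm ρ.symm, ?_, ?_⟩, h2⟩
  · rwa [Matrix.det_submatrix_equiv_self]
  · have : (U.submatrix ρ.symm ρ.symm)ᵀ = Uᵀ.submatrix ρ.symm ρ.symm := by
      simp [Matrix.transpose_submatrix]
    rw [this]
    have hM : M = (M.submatrix ρ ρ).submatrix ρ.symm ρ.symm := by
      simp [Matrix.submatrix_submatrix]
    rw [hM, Matrix.submatrix_mul_equiv, Matrix.submatrix_mul_equiv, hUe]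
    simp [Matrix.submatrix_submatrix]

section Bridge
variable {s k : ℕ} {sz : Fin k → ℕ}

/-- prepend a block to a sigma type -/
def consSigma (s : ℕ) (sz : Fin k → ℕ) :
    (Fin s ⊕ Σ i : Fin k, Fin (sz i)) ≃ Σ i : Fin (k+1), Fin (Fin.cons (α := fun _ => ℕ) s sz i) where
  toFun := Sum.elim (fun x => ⟨0, x⟩) (fun p => ⟨p.1.succ, p.2⟩)
  invFun := fun p =>
    Fin.cases (motive := fun i => Fin (Fin.cons (α := fun _ => ℕ) s sz i) →
        (Fin s ⊕ Σ i : Fin k, Fin (sz i)))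
      (fun x => Sum.inl x) (fun i x => Sum.inr ⟨i, x⟩) p.1 p.2
  left_inv := by rintro (x | ⟨i, x⟩) <;> simp
  right_inv := by
    rintro ⟨i, x⟩
    induction i using Fin.cases <;> simp
    rfl

end Bridge

lemma BD.bridge {good} {n} {M : Matrix (Fin n) (Fin n) R} (h : BD good n M) :
    ∃ (k : ℕ) (sz : Fin k → ℕ) (_ : ∀ i, sz i = 1 ∨ sz i = 2)
      (B : ∀ i, Matrix (Fin (sz i)) (Fin (sz i)) R) (e : Fin n ≃ Σ i, Fin (sz i)),
      M = (blockDiagonal' B).submatrix e e ∧ ∀ i, good (sz i) (B i) := by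
  induction h with
  | nil M =>
      refine ⟨0, Fin.elim0, fun i => i.elim0, fun i => i.elim0,
        Equiv.equivOfIsEmpty _ _, ?_, fun i => i.elim0⟩
      ext i j; exact i.elim0
  | @cons s m hs A hA M hBD ih =>
      obtain ⟨k, sz, hsz, B, e, hM, hgood⟩ := ih
      set sz' : Fin (k+1) → ℕ := Fin.cons (α := fun _ => ℕ) s sz with hsz'def
      refine ⟨k+1, sz',
        Fin.cases (motive := fun i => sz' i = 1 ∨ sz' i = 2) hs hsz,
        Fin.cons (α := fun i => Matrix (Fin (sz' i)) (Fin (sz' i)) R) A B,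
        finSumFinEquiv.symm.trans ((Equiv.sumCongr (Equiv.refl (Fin s)) e).trans (consSigma s sz)),
        ?_, Fin.cases (motive := fun i => good (sz' i)
          ((Fin.cons (α := fun i => Matrix (Fin (sz' i)) (Fin (sz' i)) R) A B) i)) hA hgood⟩
      set B' := Fin.cons (α := fun i => Matrix (Fin (sz' i)) (Fin (sz' i)) R) A B with hB'
      have key : fromBlocks A 0 0 M = (blockDiagonal' B').submatrix
          ((Equiv.sumCongr (Equiv.refl (Fin s)) e).trans (consSigma s sz))
          ((Equiv.sumCongr (Equiv.refl (Fin s)) e).trans (consSigma s sz)) := by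
        subst hM
        ext x y
        rcases x with a | a <;> rcases y with b | b
        · simp only [Matrix.submatrix_apply, Equiv.trans_apply, Equiv.sumCongr_apply,
            Sum.map_inl, Equiv.refl_apply, consSigma, Equiv.coe_fn_mk, Sum.elim_inl,
            Matrix.blockDiagonal'_apply_eq, Matrix.fromBlocks_apply₁₁]
          rfl
        · simp only [Matrix.submatrix_apply, Equiv.trans_apply, Equiv.sumCongr_apply,
            Sum.map_inl, Sum.map_inr, Equiv.refl_apply, consSigma, Equiv.coe_fn_mk,
            Sum.elim_inl, Sum.elim_inr]
          rw [Matrix.blockDiagonal'_apply, dif_neg]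
          · simp [Matrix.fromBlocks]
          · exact (Fin.succ_ne_zero _).symm
        · simp only [Matrix.submatrix_apply, Equiv.trans_apply, Equiv.sumCongr_apply,
            Sum.map_inl, Sum.map_inr, Equiv.refl_apply, consSigma, Equiv.coe_fn_mk,
            Sum.elim_inl, Sum.elim_inr]
          rw [Matrix.blockDiagonal'_apply, dif_neg]
          · simp [Matrix.fromBlocks]
          · exact Fin.succ_ne_zero _
        · simp only [Matrix.submatrix_apply, Equiv.trans_apply, Equiv.sumCongr_apply,
            Sum.map_inr, Equiv.refl_apply, consSigma, Equiv.coe_fn_mk, Sum.elim_inr]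
          rcases hea : e a with ⟨i, x⟩
          rcases heb : e b with ⟨i', y⟩
          simp only [Matrix.fromBlocks_apply₂₂, Matrix.submatrix_apply, hea, heb]
          by_cases hii : i = i'
          · subst hii
            rw [Matrix.blockDiagonal'_apply, dif_pos rfl, Matrix.blockDiagonal'_apply, dif_pos rfl]
            rfl
          · rw [Matrix.blockDiagonal'_apply_ne _ _ _ hii,
              Matrix.blockDiagonal'_apply, dif_neg (fun hc => hii (Fin.succ_injective _ hc))]
      rw [key]
      simp [Matrix.submatrix_submatrix, Equiv.coe_trans]


variable {good : ∀ m, Matrix (Fin m) (Fin m) R → Prop}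

lemma fromBlocks_submatrix_congr {s n : ℕ} {ι : Type} [Fintype ι] [DecidableEq ι]
    (A : Matrix (Fin s) (Fin s) R) (N : Matrix (Fin n) (Fin n) R) (f : ι ≃ Fin n) :
    (fromBlocks A 0 0 N).submatrix
        (Equiv.sumCongr (Equiv.refl (Fin s)) f) (Equiv.sumCongr (Equiv.refl (Fin s)) f) =
      fromBlocks A 0 0 (N.submatrix f f) := by
  ext x y
  rcases x with a | a <;> rcases y with b | b <;>
    simp [Matrix.submatrix_apply, Matrix.fromBlocks]

lemma Dd.sum_cons {s : ℕ} {ι : Type} [Fintype ι] [DecidableEq ι]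
    (hs : s = 1 ∨ s = 2) {A : Matrix (Fin s) (Fin s) R} (hA : good s A)
    {M : Matrix ι ι R} (h : Dd good M) : Dd good (fromBlocks A 0 0 M) := by
  obtain ⟨n, f, N, ⟨U, hU, hUeq⟩, hBD⟩ := h
  refine ⟨s + n, (Equiv.sumCongr (Equiv.refl (Fin s)) f).trans finSumFinEquiv,
    (fromBlocks A 0 0 N).submatrix finSumFinEquiv.symm finSumFinEquiv.symm,
    ⟨fromBlocks 1 0 0 U, ?_, ?_⟩, BD.cons hs A hA hBD⟩
  · rw [Matrix.det_fromBlocks_zero₂₁]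
    simpa using hU
  · have ht : (fromBlocks (1 : Matrix (Fin s) (Fin s) R) 0 0 U)ᵀ = fromBlocks 1 0 0 Uᵀ := by
      simp [Matrix.fromBlocks_transpose]
    rw [ht, Matrix.fromBlocks_multiply, Matrix.fromBlocks_multiply]
    simp only [Matrix.one_mul, Matrix.mul_one, Matrix.mul_zero, Matrix.zero_mul,
      add_zero, zero_add]
    rw [hUeq]
    rw [Matrix.submatrix_submatrix]
    have : (⇑finSumFinEquiv.symm ∘ ⇑((Equiv.sumCongr (Equiv.refl (Fin s)) f).trans finSumFinEquiv))
        = ⇑(Equiv.sumCongr (Equiv.refl (Fin s)) f) := by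
      funext x; simp
    rw [this, fromBlocks_submatrix_congr]

lemma BD.smul (c : R) (hgood : ∀ m B, good m B → good m (c • B)) :
    ∀ {n} {N : Matrix (Fin n) (Fin n) R}, BD good n N → BD good n (c • N) := by
  intro n N h
  induction h with
  | nil M => exact BD.nil _
  | @cons s m hs A hA M hBD ih =>
      have : c • ((fromBlocks A 0 0 M).submatrix finSumFinEquiv.symm finSumFinEquiv.symm)
          = (fromBlocks (c • A) 0 0 (c • M)).submatrix finSumFinEquiv.symm finSumFinEquiv.symm := by
        ext x y
        rcases hx : finSumFinEquiv.symm x with a | a <;> rcases hy : finSumFinEquiv.symm y with b | b <;>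
          simp [Matrix.submatrix_apply, Matrix.fromBlocks, hx, hy]
      rw [this]
      exact BD.cons hs _ (hgood _ _ hA) ih

lemma Dd.smul (c : R) (hgood : ∀ m B, good m B → good m (c • B))
    {ι : Type} [Fintype ι] [DecidableEq ι] {M : Matrix ι ι R}
    (h : Dd good M) : Dd good (c • M) := by
  obtain ⟨n, f, N, ⟨U, hU, hUeq⟩, hBD⟩ := h
  refine ⟨n, f, c • N, ⟨U, hU, ?_⟩, BD.smul c hgood hBD⟩
  rw [Matrix.mul_smul, Matrix.smul_mul, hUeq]
  ext x y; simp [Matrix.submatrix_apply]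

lemma Dd.diag (hg1 : ∀ B : Matrix (Fin 1) (Fin 1) R, good 1 B) :
    ∀ (n : ℕ) (d : Fin n → R), Dd good (diagonal d) := by
  intro n
  induction n with
  | zero =>
      intro d
      exact ⟨0, Equiv.refl _, diagonal d, ⟨1, by simp, by simp⟩, BD.nil _⟩
  | succ n ih =>
      intro d
      have ρ : (Fin 1 ⊕ Fin n) ≃ Fin (n+1) := finSumFinEquiv.trans (finCongr (by omega))
      refine Dd.reindex ρ ?_
      have key : (diagonal d).submatrix ρ ρ =
          fromBlocks (Matrix.of ![![d (ρ (Sum.inl 0))]]) 0 0 (diagonal (fun x => d (ρ (Sum.inr x)))) := by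
        ext x y
        rcases x with a | a <;> rcases y with b | b
        · have ha : a = 0 := Subsingleton.elim _ _
          have hb : b = 0 := Subsingleton.elim _ _
          subst ha; subst hb
          simp [Matrix.submatrix_apply, Matrix.diagonal_apply_eq]
        · have hne : ρ (Sum.inl a) ≠ ρ (Sum.inr b) := fun hc => by
            exact absurd (ρ.injective hc) (by simp)
          simp [Matrix.submatrix_apply, Matrix.diagonal_apply_ne _ hne]
        · have hne : ρ (Sum.inr a) ≠ ρ (Sum.inl b) := fun hc => by
            exact absurd (ρ.injective hc) (by simp)
          simp [Matrix.submatrix_apply, Matrix.diagonal_apply_ne _ hne]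
        · by_cases hab : a = b
          · subst hab; simp [Matrix.submatrix_apply]
          · have hne : ρ (Sum.inr a) ≠ ρ (Sum.inr b) := fun hc => by
              have := ρ.injective hc
              simp only [Sum.inr.injEq] at this
              exact hab this
            simp [Matrix.submatrix_apply, Matrix.diagonal_apply_ne _ hne,
              Matrix.diagonal_apply_ne _ hab]
      rw [key]
      exact Dd.sum_cons (Or.inl rfl) (hg1 _) (ih _)


lemma pivot {ι κ : Type} [Fintype ι] [DecidableEq ι] [Fintype κ] [DecidableEq κ]
    (M : Matrix (ι ⊕ κ) (ι ⊕ κ) R) (hM : M.IsSymm) (hA : IsUnit M.toBlocks₁₁.det) :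
    Cg M (fromBlocks M.toBlocks₁₁ 0 0
        (M.toBlocks₂₂ - M.toBlocks₁₂ᵀ * M.toBlocks₁₁⁻¹ * M.toBlocks₁₂)) ∧
      (M.toBlocks₂₂ - M.toBlocks₁₂ᵀ * M.toBlocks₁₁⁻¹ * M.toBlocks₁₂).IsSymm := by
  set A := M.toBlocks₁₁ with hA'
  set B := M.toBlocks₁₂ with hB'
  set D := M.toBlocks₂₂ with hD'
  have hsym : ∀ x y, M y x = M x y := fun x y => by
    conv_lhs => rw [← hM]
    rfl
  have hAT : Aᵀ = A := by
    ext a b; exact hsym _ _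
  have hDT : Dᵀ = D := by
    ext a b; exact hsym _ _
  have h21 : M.toBlocks₂₁ = Bᵀ := by
    ext a b; exact hsym _ _
  have e1 : M = fromBlocks A B Bᵀ D := by
    rw [← h21, hA', hB', hD', fromBlocks_toBlocks]
  have hSymS : (D - Bᵀ * A⁻¹ * B).IsSymm := by
    unfold Matrix.IsSymm
    rw [transpose_sub, hDT, transpose_mul, transpose_mul, transpose_transpose,
      transpose_nonsing_inv, hAT]
    rw [Matrix.mul_assoc]
  refine ⟨⟨fromBlocks 1 (-(A⁻¹ * B)) 0 1, ?_, ?_⟩, hSymS⟩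
  · rw [Matrix.det_fromBlocks_zero₂₁]; simp
  · have hUT : (fromBlocks (1 : Matrix ι ι R) (-(A⁻¹ * B)) 0 1)ᵀ
        = fromBlocks (1 : Matrix ι ι R) (0 : Matrix ι κ R) (-(A⁻¹ * B))ᵀ (1 : Matrix κ κ R) := by
      rw [fromBlocks_transpose]; simp
    rw [hUT, e1, fromBlocks_multiply, fromBlocks_multiply]
    have hAAB : A * (A⁻¹ * B) = B := by
      rw [← Matrix.mul_assoc, Matrix.mul_nonsing_inv _ hA, Matrix.one_mul]
    have hABA : (A⁻¹ * B)ᵀ * A = Bᵀ := by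
      rw [transpose_mul, transpose_nonsing_inv, hAT, Matrix.mul_assoc,
        Matrix.nonsing_inv_mul _ hA, Matrix.mul_one]
    have hinvT : A⁻¹ᵀ = A⁻¹ := by rw [Matrix.transpose_nonsing_inv, hAT]
    simp only [Matrix.one_mul, Matrix.mul_one, Matrix.mul_zero, Matrix.zero_mul,
      add_zero, zero_add, Matrix.mul_neg, Matrix.neg_mul, transpose_neg, transpose_mul, hinvT]
    have h0 : -(Bᵀ * A⁻¹ * A) + Bᵀ = 0 := by
      rw [Matrix.mul_assoc, Matrix.nonsing_inv_mul _ hA, Matrix.mul_one, neg_add_cancel]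
    rw [h0, hAAB]
    simp only [Matrix.zero_mul, neg_add_cancel, neg_zero, zero_add]
    rw [neg_add_eq_sub]

lemma prime_two : Prime (2 : R) := by
  have := PadicInt.prime_p (p := 2)
  simpa using this

lemma symm_apply {ι : Type} {M : Matrix ι ι R} (hM : M.IsSymm) (x y : ι) : M y x = M x y :=
  congrFun (congrFun hM x) y

lemma symm_submatrix {ι κ : Type} (M : Matrix ι ι R) (hM : M.IsSymm) (f : κ → ι) :
    (M.submatrix f f).IsSymm := by
  ext a b
  simp only [Matrix.transpose_apply, Matrix.submatrix_apply]
  exact symm_apply hM _ _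

lemma exists_rho1 {n : ℕ} (i0 : Fin n) :
    ∃ ρ : Fin n ≃ (Fin 1 ⊕ Fin (n-1)), ρ.symm (Sum.inl 0) = i0 := by
  have hn : 0 < n := i0.pos
  have h1n : n = 1 + (n-1) := by omega
  set z0 : Fin n := ⟨0, hn⟩ with hz0
  set σ : Equiv.Perm (Fin n) := Equiv.swap i0 z0 with hσ
  refine ⟨σ.trans ((finCongr h1n).trans finSumFinEquiv.symm), ?_⟩
  rw [Equiv.symm_apply_eq]
  symm
  show finSumFinEquiv.symm (finCongr h1n (σ i0)) = Sum.inl 0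
  have h1 : σ i0 = z0 := Equiv.swap_apply_left i0 z0
  rw [h1]
  have h2 : (finCongr h1n) z0 = Fin.castAdd (n-1) (0 : Fin 1) := Fin.ext (by simp [hz0])
  rw [h2, finSumFinEquiv_symm_apply_castAdd]

lemma exists_rho2 {n : ℕ} (i j : Fin n) (hij : i ≠ j) :
    ∃ ρ : Fin n ≃ (Fin 2 ⊕ Fin (n-2)),
      ρ.symm (Sum.inl 0) = i ∧ ρ.symm (Sum.inl 1) = j := by
  have hvij : i.val ≠ j.val := fun h => hij (Fin.ext h)
  have hn : 2 ≤ n := by have := i.isLt; have := j.isLt; omega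
  have h2n : n = 2 + (n-2) := by omega
  set z0 : Fin n := ⟨0, by omega⟩ with hz0
  set z1 : Fin n := ⟨1, by omega⟩ with hz1
  have hz01 : z0 ≠ z1 := by simp [hz0, hz1, Fin.ext_iff]
  set σ1 : Equiv.Perm (Fin n) := Equiv.swap i z0 with hσ1
  set a : Fin n := σ1 j with ha
  have haz0 : a ≠ z0 := by
    intro h
    have : j = i := σ1.injective (h.trans (Equiv.swap_apply_left i z0).symm)
    exact hij this.symm
  set σ : Equiv.Perm (Fin n) := σ1.trans (Equiv.swap a z1) with hσ
  have key0 : σ i = z0 := by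
    show (Equiv.swap a z1) (σ1 i) = z0
    rw [show σ1 i = z0 from Equiv.swap_apply_left i z0]
    exact Equiv.swap_apply_of_ne_of_ne haz0.symm hz01
  have key1 : σ j = z1 := by
    show (Equiv.swap a z1) (σ1 j) = z1
    rw [← ha]
    exact Equiv.swap_apply_left a z1
  refine ⟨σ.trans ((finCongr h2n).trans finSumFinEquiv.symm), ?_, ?_⟩
  · rw [Equiv.symm_apply_eq]
    symm
    show finSumFinEquiv.symm (finCongr h2n (σ i)) = Sum.inl 0
    rw [key0]
    have h2 : (finCongr h2n) z0 = Fin.castAdd (n-2) (0 : Fin 2) := Fin.ext (by simp [hz0])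
    rw [h2, finSumFinEquiv_symm_apply_castAdd]
  · rw [Equiv.symm_apply_eq]
    symm
    show finSumFinEquiv.symm (finCongr h2n (σ j)) = Sum.inl 1
    rw [key1]
    have h2 : (finCongr h2n) z1 = Fin.castAdd (n-2) (1 : Fin 2) := Fin.ext (by simp [hz1])
    rw [h2, finSumFinEquiv_symm_apply_castAdd]

lemma extract {n : ℕ} (G : Matrix (Fin n) (Fin n) R) (hG : G.IsSymm) (hne : G ≠ 0) :
    ∃ (v : ℕ) (H : Matrix (Fin n) (Fin n) R),
      G = (2:R)^v • H ∧ H.IsSymm ∧ ∃ i j, IsUnit (H i j) := by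
  classical
  set I : Ideal R := Ideal.span (Set.range (fun p : Fin n × Fin n => G p.1 p.2)) with hI
  have hIne : I ≠ ⊥ := by
    intro h
    apply hne
    ext i j
    have : G i j ∈ I := Ideal.subset_span ⟨(i,j), rfl⟩
    rw [h] at this
    exact Ideal.mem_bot.mp this
  obtain ⟨v, hv⟩ := PadicInt.ideal_eq_span_pow_p hIne
  have hcast : (((2:ℕ)) : R) ^ v = (2:R) ^ v := by norm_cast
  have hdvd : ∀ i j, ∃ c, G i j = (2:R)^v * c := by
    intro i j
    have : G i j ∈ I := Ideal.subset_span ⟨(i,j), rfl⟩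
    rw [hv, Ideal.mem_span_singleton, hcast] at this
    exact this
  choose H hH using hdvd
  have h2 : (2:R)^v ≠ 0 := pow_ne_zero _ prime_two.ne_zero
  refine ⟨v, Matrix.of H, ?_, ?_, ?_⟩
  · ext i j
    simp only [Matrix.smul_apply, Matrix.of_apply, smul_eq_mul]
    exact hH i j
  · ext i j
    simp only [Matrix.transpose_apply, Matrix.of_apply]
    apply mul_left_cancel₀ h2
    rw [← hH, ← hH]
    exact symm_apply hG _ _
  · by_contra hcon
    push_neg at hcon
    have hall : ∀ i j, (2:R)^(v+1) ∣ G i j := by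
      intro i j
      have h2d : (2:R) ∣ H i j := two_dvd_of_not_isUnit (hcon i j)
      obtain ⟨c, hc⟩ := h2d
      exact ⟨c, by rw [hH i j, hc, pow_succ]; ring⟩
    have hle : I ≤ Ideal.span {(2:R)^(v+1)} := by
      rw [hI, Ideal.span_le]
      rintro x ⟨⟨i, j⟩, rfl⟩
      rw [SetLike.mem_coe, Ideal.mem_span_singleton]
      exact hall i j
    have hmem : ((2:ℕ):R)^v ∈ I := by
      rw [hv]
      exact Ideal.mem_span_singleton_self _
    have := hle hmem
    rw [Ideal.mem_span_singleton] at this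
    rw [show (((2:ℕ)):R) = (2:R) by norm_cast] at this
    have h21 : (2:R) ∣ 1 := by
      have h' : (2:R)^v * 2 ∣ (2:R)^v * 1 := by
        rw [mul_one, ← pow_succ]
        exact this
      exact (mul_dvd_mul_iff_left h2).mp h'
    exact not_isUnit_of_two_dvd (dvd_refl 2) (isUnit_of_dvd_one h21)



lemma lemA : ∀ (n : ℕ) (G : Matrix (Fin n) (Fin n) R), G.IsSymm → Dd good1 G := by
  intro n
  induction n using Nat.strong_induction_on with
  | _ n IH =>
    intro G hG
    by_cases hzero : G = 0
    · subst hzero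
      have := Dd.diag (good := good1) (fun B => good_one (Or.inl rfl) B) n (fun _ => 0)
      simpa using this
    · obtain ⟨v, H, hGH, hHsym, i0, j0, hunit⟩ := extract G hG hzero
      have hDH : Dd good1 H := by
        by_cases hdiag : ∃ i, IsUnit (H i i)
        · -- 1x1 pivot
          obtain ⟨i1, hi1⟩ := hdiag
          obtain ⟨ρ, hρ⟩ := exists_rho1 i1
          set M1 := H.submatrix ρ.symm ρ.symm with hM1
          have hM1s : M1.IsSymm := symm_submatrix H hHsym _
          have hdet : IsUnit M1.toBlocks₁₁.det := by
            rw [Matrix.det_fin_one]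
            show IsUnit (M1 (Sum.inl 0) (Sum.inl 0))
            rw [hM1]
            simpa [Matrix.submatrix_apply, hρ] using hi1
          obtain ⟨hcg, hSs⟩ := pivot M1 hM1s hdet
          have hS : Dd good1 (M1.toBlocks₂₂ - M1.toBlocks₁₂ᵀ * M1.toBlocks₁₁⁻¹ * M1.toBlocks₁₂) :=
            IH (n-1) (by have := i1.pos; omega) _ hSs
          exact Dd.reindex ρ.symm (Dd.of_cg hcg
            (Dd.sum_cons (Or.inl rfl) (good_one (Or.inl rfl) _) hS))
        · push_neg at hdiag
          have hij : i0 ≠ j0 := by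
            intro h; exact hdiag i0 (h ▸ hunit)
          obtain ⟨ρ, hρ0, hρ1⟩ := exists_rho2 i0 j0 hij
          set M1 := H.submatrix ρ.symm ρ.symm with hM1
          have hM1s : M1.IsSymm := symm_submatrix H hHsym _
          have hA : ∀ x y : Fin 2, M1.toBlocks₁₁ x y = H (ρ.symm (Sum.inl x)) (ρ.symm (Sum.inl y)) :=
            fun x y => rfl
          have hdet : IsUnit M1.toBlocks₁₁.det := by
            rw [Matrix.det_fin_two]
            rw [hA, hA, hA, hA, hρ0, hρ1]
            by_contra hcon
            have h2 : (2:R) ∣ H i0 i0 * H j0 j0 - H i0 j0 * H j0 i0 :=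
              two_dvd_of_not_isUnit hcon
            have h3 : (2:R) ∣ H i0 i0 * H j0 j0 :=
              Dvd.dvd.mul_right (two_dvd_of_not_isUnit (hdiag i0)) _
            have h4 : (2:R) ∣ H i0 j0 * H j0 i0 := by
              have := dvd_sub h3 h2
              simpa using this
            rcases prime_two.2.2 _ _ h4 with h5 | h5
            · exact not_isUnit_of_two_dvd h5 hunit
            · rw [symm_apply hHsym] at h5
              exact not_isUnit_of_two_dvd h5 hunit
          have hgood : good1 2 M1.toBlocks₁₁ := by
            intro x y hxy
            constructor
            · rw [hA]
              exact two_dvd_of_not_isUnit (hdiag _)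
            · rw [hA, hA]
              exact symm_apply hHsym _ _
          obtain ⟨hcg, hSs⟩ := pivot M1 hM1s hdet
          have hS : Dd good1 (M1.toBlocks₂₂ - M1.toBlocks₁₂ᵀ * M1.toBlocks₁₁⁻¹ * M1.toBlocks₁₂) :=
            IH (n-2) (by have := i0.pos; omega) _ hSs
          exact Dd.reindex ρ.symm (Dd.of_cg hcg
            (Dd.sum_cons (Or.inr rfl) hgood hS))
      rw [hGH]
      exact Dd.smul _ (fun m B hB => good1_smul _ hB) hDH



lemma symm_conj {ι : Type} [Fintype ι] {M : Matrix ι ι R} (hM : M.IsSymm) (U : Matrix ι ι R) :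
    (Uᵀ * M * U).IsSymm := by
  unfold Matrix.IsSymm
  rw [transpose_mul, transpose_mul, transpose_transpose, hM]
  rw [Matrix.mul_assoc]

lemma BD.smul2 {good good' : ∀ m, Matrix (Fin m) (Fin m) R → Prop} (c : R)
    (hgood : ∀ m B, good m B → good' m (c • B)) :
    ∀ {n} {N : Matrix (Fin n) (Fin n) R}, BD good n N → BD good' n (c • N) := by
  intro n N h
  induction h with
  | nil M => exact BD.nil _
  | @cons s m hs A hA M hBD ih =>
      have : c • ((fromBlocks A 0 0 M).submatrix finSumFinEquiv.symm finSumFinEquiv.symm)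
          = (fromBlocks (c • A) 0 0 (c • M)).submatrix finSumFinEquiv.symm finSumFinEquiv.symm := by
        ext x y
        rcases hx : finSumFinEquiv.symm x with a | a <;> rcases hy : finSumFinEquiv.symm y with b | b <;>
          simp [Matrix.submatrix_apply, Matrix.fromBlocks, hx, hy]
      rw [this]
      exact BD.cons hs _ (hgood _ _ hA) ih

lemma Dd.smul2 {good good' : ∀ m, Matrix (Fin m) (Fin m) R → Prop} (c : R)
    (hgood : ∀ m B, good m B → good' m (c • B))
    {ι : Type} [Fintype ι] [DecidableEq ι] {M : Matrix ι ι R}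
    (h : Dd good M) : Dd good' (c • M) := by
  obtain ⟨n, f, N, ⟨U, hU, hUeq⟩, hBD⟩ := h
  refine ⟨n, f, c • N, ⟨U, hU, ?_⟩, BD.smul2 c hgood hBD⟩
  rw [Matrix.mul_smul, Matrix.smul_mul, hUeq]
  ext x y; simp [Matrix.submatrix_apply]

lemma inv_one_by_one (A : Matrix (Fin 1) (Fin 1) R) :
    A⁻¹ 0 0 = Ring.inverse (A 0 0) := by
  rw [Matrix.inv_def, Matrix.adjugate_fin_one, Matrix.det_fin_one]
  simp

lemma isUnit_ring_inverse {p : R} (hp : IsUnit p) : IsUnit (Ring.inverse p) :=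
  IsUnit.of_mul_eq_one p (Ring.inverse_mul_cancel _ hp)



lemma lemB : ∀ (n : ℕ) (G : Matrix (Fin n) (Fin n) R), G.IsSymm →
    (∃ i, IsUnit (G i i)) → Dd good2 G := by
  intro n
  induction n using Nat.strong_induction_on with
  | _ n IH =>
    intro G hG hex
    obtain ⟨i1, hi1⟩ := hex
    obtain ⟨ρ, hρ⟩ := exists_rho1 i1
    set M1 := G.submatrix ρ.symm ρ.symm with hM1
    have hM1s : M1.IsSymm := symm_submatrix G hG _
    have hu : IsUnit (M1 (Sum.inl 0) (Sum.inl 0)) := by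
      rw [hM1]; simpa [Matrix.submatrix_apply, hρ] using hi1
    have hdet : IsUnit M1.toBlocks₁₁.det := by
      rw [Matrix.det_fin_one]; exact hu
    obtain ⟨hcg, hSs⟩ := pivot M1 hM1s hdet
    set S := M1.toBlocks₂₂ - M1.toBlocks₁₂ᵀ * M1.toBlocks₁₁⁻¹ * M1.toBlocks₁₂ with hSdef
    have hmain : Dd good2 (fromBlocks M1.toBlocks₁₁ 0 0 S) := by
      by_cases hα : ∃ l, IsUnit (S l l)
      · exact Dd.sum_cons (Or.inl rfl) (good_one (Or.inr rfl) _)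
          (IH (n-1) (by have := i1.pos; omega) S hSs hα)
      · push_neg at hα
        by_cases hβ : ∃ j l, IsUnit (S j l)
        · obtain ⟨j, l, hw⟩ := hβ
          have hjl : j ≠ l := fun h => hα l (h ▸ hw)
          have hlj : l ≠ j := fun h => hjl h.symm
          set A1 := M1.toBlocks₁₁ with hA1
          set c : Matrix (Fin 1) (Fin (n-1)) R :=
            Matrix.of (fun _ y => if y = j then 1 else 0) with hc
          set T : Matrix (Fin 1 ⊕ Fin (n-1)) (Fin 1 ⊕ Fin (n-1)) R := fromBlocks 1 c 0 1 with hT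
          set M2 := fromBlocks A1 0 0 S with hM2
          set M3 := fromBlocks A1 (A1*c) (cᵀ*A1) (cᵀ*A1*c + S) with hM3
          have hTdet : IsUnit T.det := by
            rw [hT, Matrix.det_fromBlocks_zero₂₁]; simp
          have hcg2 : Cg M2 M3 := by
            refine ⟨T, hTdet, ?_⟩
            have hTT : Tᵀ = fromBlocks (1 : Matrix (Fin 1) (Fin 1) R)
                (0 : Matrix (Fin 1) (Fin (n-1)) R) cᵀ (1 : Matrix (Fin (n-1)) (Fin (n-1)) R) := by
              rw [hT, fromBlocks_transpose]; simp
            rw [hTT, hT, hM2, hM3, fromBlocks_multiply, fromBlocks_multiply]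
            simp only [Matrix.one_mul, Matrix.mul_one, Matrix.zero_mul, Matrix.mul_zero,
              add_zero, zero_add, Matrix.mul_assoc]
          have hM2s : M2.IsSymm := by
            obtain ⟨U, hU, hUeq⟩ := hcg
            rw [← hUeq]
            exact symm_conj hM1s U
          have hM3s : M3.IsSymm := by
            obtain ⟨T', hT', hTeq⟩ := hcg2
            rw [← hTeq]; exact symm_conj hM2s T'
          set ρ2 : Equiv.Perm (Fin 1 ⊕ Fin (n-1)) := Equiv.swap (Sum.inl 0) (Sum.inr j) with hρ2
          set M4 := M3.submatrix ρ2 ρ2 with hM4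
          have hM4s : M4.IsSymm := symm_submatrix _ hM3s _
          have hρ2l : ∀ y : Fin (n-1), y ≠ j → ρ2 (Sum.inr y) = Sum.inr y := by
            intro y hy
            exact Equiv.swap_apply_of_ne_of_ne (by simp) (by simp [hy])
          have hcAc : ∀ x y : Fin (n-1), (cᵀ*A1*c + S) x y
              = (if x = j then 1 else 0) * A1 0 0 * (if y = j then 1 else 0) + S x y := by
            intro x y
            simp only [Matrix.add_apply, Matrix.mul_apply, Fin.sum_univ_one,
              Matrix.transpose_apply, hc, Matrix.of_apply]
          have hM3rr : ∀ x y : Fin (n-1), M3 (Sum.inr x) (Sum.inr y)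
              = (if x = j then 1 else 0) * A1 0 0 * (if y = j then 1 else 0) + S x y := by
            intro x y
            rw [hM3]
            exact hcAc x y
          have hp : M4 (Sum.inl 0) (Sum.inl 0) = A1 0 0 + S j j := by
            rw [hM4, Matrix.submatrix_apply, hρ2, Equiv.swap_apply_left, hM3rr]
            simp
          have hpu : IsUnit (M4 (Sum.inl 0) (Sum.inl 0)) := by
            rw [hp, add_comm]
            exact isUnit_of_dvd_add (two_dvd_of_not_isUnit (hα j)) hu
          have hdet4 : IsUnit M4.toBlocks₁₁.det := by
            rw [Matrix.det_fin_one]; exact hpu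
          obtain ⟨hcg4, hC4s⟩ := pivot M4 hM4s hdet4
          set C := M4.toBlocks₂₂ - M4.toBlocks₁₂ᵀ * M4.toBlocks₁₁⁻¹ * M4.toBlocks₁₂ with hC
          have hB4l : M4.toBlocks₁₂ 0 l = S j l := by
            show M4 (Sum.inl 0) (Sum.inr l) = S j l
            rw [hM4, Matrix.submatrix_apply, hρ2, Equiv.swap_apply_left,
              hρ2l l hlj, hM3rr]
            simp [hlj]
          have hD4l : M4.toBlocks₂₂ l l = S l l := by
            show M4 (Sum.inr l) (Sum.inr l) = S l l
            rw [hM4, Matrix.submatrix_apply, hρ2, hρ2l l hlj, hM3rr]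
            simp [hlj]
          have hA4 : M4.toBlocks₁₁⁻¹ 0 0 = Ring.inverse (M4 (Sum.inl 0) (Sum.inl 0)) := by
            rw [inv_one_by_one]
            rfl
          have hCll : IsUnit (C l l) := by
            have hq : (M4.toBlocks₁₂ᵀ * M4.toBlocks₁₁⁻¹ * M4.toBlocks₁₂) l l
                = S j l * Ring.inverse (M4 (Sum.inl 0) (Sum.inl 0)) * S j l := by
              simp only [Matrix.mul_apply, Fin.sum_univ_one, Matrix.transpose_apply]
              rw [hB4l, hA4]
            have : C l l = S l l - S j l * Ring.inverse (M4 (Sum.inl 0) (Sum.inl 0)) * S j l := by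
              rw [hC, Matrix.sub_apply, hD4l, hq]
            rw [this]
            exact isUnit_of_dvd_sub (two_dvd_of_not_isUnit (hα l))
              ((hw.mul (isUnit_ring_inverse hpu)).mul hw)
          have hDC : Dd good2 C := IH (n-1) (by have := i1.pos; omega) C hC4s ⟨l, hCll⟩
          have hDM4 : Dd good2 M4 := Dd.of_cg hcg4
            (Dd.sum_cons (Or.inl rfl) (good_one (Or.inr rfl) _) hDC)
          have hDM3 : Dd good2 M3 := Dd.reindex ρ2 hDM4
          exact Dd.of_cg hcg2 hDM3
        · push_neg at hβ
          have hdvd : ∀ x y, ∃ d, S x y = 2 * d := fun x y =>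
            two_dvd_of_not_isUnit (hβ x y)
          choose S' hS' using hdvd
          have hsplit : S = (2:R) • Matrix.of S' := by
            ext x y
            simp only [Matrix.smul_apply, Matrix.of_apply, smul_eq_mul]
            exact hS' x y
          have hS'symm : (Matrix.of S').IsSymm := by
            ext x y
            simp only [Matrix.transpose_apply, Matrix.of_apply]
            apply mul_left_cancel₀ prime_two.ne_zero
            rw [← hS', ← hS']
            exact symm_apply hSs _ _
          have : Dd good2 S := by
            rw [hsplit]
            exact Dd.smul2 2 (fun m B _ => good2_two_smul m B) (lemA _ _ hS'symm)
          exact Dd.sum_cons (Or.inl rfl) (good_one (Or.inr rfl) _) this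
    exact Dd.reindex ρ.symm (Dd.of_cg hcg hmain)



lemma represents_unit {n : ℕ} (G : Matrix (Fin n) (Fin n) R) (hG : G.IsSymm)
    (x : Fin n → R) (hx : IsUnit (x ⬝ᵥ G.mulVec x)) : Dd good2 G := by
  have hxi : ∃ i, IsUnit (x i) := by
    by_contra hcon
    push_neg at hcon
    have hdv : (2:R) ∣ x ⬝ᵥ G.mulVec x := by
      unfold dotProduct
      apply Finset.dvd_sum
      intro i _
      exact Dvd.dvd.mul_right (two_dvd_of_not_isUnit (hcon i)) _
    exact not_isUnit_of_two_dvd hdv hx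
  obtain ⟨i, hxiu⟩ := hxi
  set U0 := (1 : Matrix (Fin n) (Fin n) R).updateCol i x with hU0
  have hdet : IsUnit U0.det := by
    have h1 : U0.det = Matrix.cramer (1 : Matrix (Fin n) (Fin n) R) x i := by
      rw [Matrix.cramer_apply]
    rw [h1, Matrix.cramer_one]
    exact hxiu
  have hsym1 : (U0ᵀ * G * U0).IsSymm := symm_conj hG U0
  have hcol : ∀ a, U0 a i = x a := fun a => Matrix.updateCol_self
  have hentry : (U0ᵀ * G * U0) i i = x ⬝ᵥ G.mulVec x := by
    have h2 : (U0ᵀ * G * U0) i i = ∑ b, (∑ a, x a * G a b) * x b := by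
      rw [Matrix.mul_apply]
      refine Finset.sum_congr rfl (fun b _ => ?_)
      rw [Matrix.mul_apply, hcol]
      congr 1
      refine Finset.sum_congr rfl (fun a _ => ?_)
      rw [Matrix.transpose_apply, hcol]
    rw [h2]
    have h3 : ∀ b, (∑ a, x a * G a b) * x b = ∑ a, x a * G a b * x b :=
      fun b => Finset.sum_mul _ _ _
    rw [Finset.sum_congr rfl (fun b _ => h3 b), Finset.sum_comm]
    unfold dotProduct Matrix.mulVec
    refine Finset.sum_congr rfl (fun a _ => ?_)
    show ∑ b, x a * G a b * x b = x a * (fun j => G a j) ⬝ᵥ x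
    unfold dotProduct
    rw [Finset.mul_sum]
    exact Finset.sum_congr rfl (fun b _ => by ring)
  have hmain := lemB n (U0ᵀ * G * U0) hsym1 ⟨i, hentry ▸ hx⟩
  exact Dd.of_cg ⟨U0, hdet, rfl⟩ hmain


end Pf

/-- Every symmetric matrix over the 2-adic integers is, after a
unimodular change of basis, block diagonal with blocks of size 1 or 2; moreover,
if the associated quadratic form represents a unit, the blocks of size 2 can be
chosen to have all entries in `2ℤ₂`. -/
theorem padic_symmetric_matrix_block_diagonalization
    {n : ℕ} (G : Matrix (Fin n) (Fin n) ℤ_[2]) (hG : G.IsSymm) :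
    (∃ U : Matrix (Fin n) (Fin n) ℤ_[2], IsUnit U.det ∧
      ∃ (k : ℕ) (sz : Fin k → ℕ) (_ : ∀ i, sz i = 1 ∨ sz i = 2)
        (B : ∀ i, Matrix (Fin (sz i)) (Fin (sz i)) ℤ_[2])
        (e : Fin n ≃ ((i : Fin k) × Fin (sz i))),
        Uᵀ * G * U = (Matrix.blockDiagonal' B).submatrix e e) ∧
    ((∃ x : Fin n → ℤ_[2], IsUnit (x ⬝ᵥ G.mulVec x)) →
      ∃ U : Matrix (Fin n) (Fin n) ℤ_[2], IsUnit U.det ∧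
      ∃ (k : ℕ) (sz : Fin k → ℕ) (_ : ∀ i, sz i = 1 ∨ sz i = 2)
        (B : ∀ i, Matrix (Fin (sz i)) (Fin (sz i)) ℤ_[2])
        (e : Fin n ≃ ((i : Fin k) × Fin (sz i))),
        Uᵀ * G * U = (Matrix.blockDiagonal' B).submatrix e e ∧
          ∀ i, sz i = 2 → ∀ j l, (2 : ℤ_[2]) ∣ B i j l) := by
  constructor
  · obtain ⟨n', f, N, ⟨U, hU, hUeq⟩, hBD⟩ := Pf.lemA n G hG
    obtain ⟨k, sz, hsz, B, e', hN, hgood⟩ := Pf.BD.bridge hBD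
    refine ⟨U, hU, k, sz, hsz, B, f.trans e', ?_⟩
    rw [hUeq, hN, Matrix.submatrix_submatrix]
    simp [Equiv.coe_trans]
  · rintro ⟨x, hx⟩
    obtain ⟨n', f, N, ⟨U, hU, hUeq⟩, hBD⟩ := Pf.represents_unit G hG x hx
    obtain ⟨k, sz, hsz, B, e', hN, hgood⟩ := Pf.BD.bridge hBD
    refine ⟨U, hU, k, sz, hsz, B, f.trans e', ?_, ?_⟩
    · rw [hUeq, hN, Matrix.submatrix_submatrix]
      simp [Equiv.coe_trans]
    · intro i hi2 j l
      by_cases hjl : j = l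
      · subst hjl
        have hcard : 1 < Fintype.card (Fin (sz i)) := by simp [hi2]
        obtain ⟨l', hl'⟩ := Fintype.exists_ne_of_one_lt_card hcard j
        exact (hgood i j l' (fun h => hl' h.symm)).1
      · exact (hgood i j l hjl).2
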